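/- arXiv:2206.09919 — 2 statements merged into one kernel-verified Lean document; each statement's English description precedes it below -/
import Mathlib

section
/- (Jackson-type bound for trigonometric interpolation) Let f : ℝ → ℝ be 2π-periodic and let S_n be the trigonometric polynomial of degree n with coefficients c = a_0/2, a_s = (2/(2n+1)) ∑_{k=1}^{2n+1} f(θ_k) cos(sθ_k), b_s = (2/(2n+1)) ∑_{k=1}^{2n+1} f(θ_k) sin(sθ_k), at equidistant nodes θ_k = 2π(k−1)/(2n+1). If |f(θ_k)| ≤ f_max for all k, then |S_n(θ)| ≤ 5 f_max log(n) for all θ (for n ≥ 2). -/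
/-- The equidistant interpolation nodes `θ_k = 2πk/(2n+1)`. -/
noncomputable def node (n : ℕ) (k : Fin (2 * n + 1)) : ℝ :=
  2 * Real.pi * (k : ℕ) / (2 * n + 1)

/-- The degree-`n` trigonometric interpolation polynomial built from the node values `v`
via the discrete Fourier coefficients `a_s = (2/(2n+1)) ∑ₖ v_k cos(sθ_k)`,
`b_s = (2/(2n+1)) ∑ₖ v_k sin(sθ_k)`, `c = a₀/2`. -/
noncomputable def trigInterp (n : ℕ) (v : Fin (2 * n + 1) → ℝ) (θ : ℝ) : ℝ :=
  (1 / (2 * (n : ℝ) + 1)) * ∑ k, v k +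
    ∑ s ∈ Finset.Icc 1 n,
      (((2 / (2 * (n : ℝ) + 1)) * ∑ k, v k * Real.cos (s * node n k)) * Real.cos (s * θ) +
       ((2 / (2 * (n : ℝ) + 1)) * ∑ k, v k * Real.sin (s * node n k)) * Real.sin (s * θ))

open Real Finset

noncomputable def Dker (n : ℕ) (x : ℝ) : ℝ := 1 + 2 * ∑ s ∈ Finset.Icc 1 n, Real.cos (s * x)


lemma trigInterp_eq (n : ℕ) (v : Fin (2 * n + 1) → ℝ) (θ : ℝ) :
    trigInterp n v θ = (1 / (2 * (n : ℝ) + 1)) * ∑ k, v k * Dker n (θ - node n k) := by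
  unfold trigInterp Dker
  simp only [mul_add, mul_one, Finset.mul_sum, Finset.sum_add_distrib, Real.cos_sub,
    mul_sub, Finset.sum_mul]
  congr 1
  congr 1 <;>
  · conv_rhs => rw [Finset.sum_comm]
    exact Finset.sum_congr rfl fun s _ => Finset.sum_congr rfl fun k _ => by ring

lemma Dker_mul_sin (n : ℕ) (x : ℝ) :
    Real.sin (x / 2) * Dker n x = Real.sin ((2 * n + 1) * x / 2) := by
  induction n with
  | zero => simp [Dker]
  | succ n ih =>
    rw [Dker, Finset.sum_Icc_succ_top (by omega)]
    have := ih
    rw [Dker] at this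
    push_cast at this ⊢
    rw [show (2*((n:ℝ)+1)+1) * x / 2 = ((n:ℝ)+1)*x + x/2 by ring, Real.sin_add]
    rw [show (2*(n:ℝ)+1) * x / 2 = ((n:ℝ)+1)*x - x/2 by ring, Real.sin_sub] at this
    nlinarith [this]

lemma Dker_abs_le (n : ℕ) (x : ℝ) : |Dker n x| ≤ 2 * n + 1 := by
  have h : |∑ s ∈ Finset.Icc 1 n, Real.cos (s * x)| ≤ n := by
    calc |∑ s ∈ Finset.Icc 1 n, Real.cos (s * x)| ≤ ∑ s ∈ Finset.Icc 1 n, |Real.cos (s * x)| :=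
          Finset.abs_sum_le_sum_abs _ _
      _ ≤ ∑ s ∈ Finset.Icc 1 n, 1 := Finset.sum_le_sum fun i _ => Real.abs_cos_le_one _
      _ = n := by simp
  rw [Dker]
  calc |1 + 2 * ∑ s ∈ Finset.Icc 1 n, Real.cos (s * x)|
      ≤ |(1:ℝ)| + |2 * ∑ s ∈ Finset.Icc 1 n, Real.cos (s * x)| := abs_add_le _ _
    _ ≤ 1 + 2 * n := by rw [abs_one, abs_mul]; simp only [abs_two]; linarith
    _ = 2 * n + 1 := by ring

lemma Dker_neg (n : ℕ) (x : ℝ) : Dker n (-x) = Dker n x := by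
  simp [Dker, mul_comm]

lemma Dker_int_period (n : ℕ) (m : ℤ) (x : ℝ) : Dker n (x + m * (2 * Real.pi)) = Dker n x := by
  unfold Dker
  congr 1
  congr 1
  refine Finset.sum_congr rfl fun s hs => ?_
  rw [mul_add, show (s:ℝ) * ((m:ℝ) * (2*Real.pi)) = ((s * m : ℤ) : ℝ) * (2*Real.pi) by push_cast; ring,
    Real.cos_add_int_mul_two_pi]

lemma Dker_abs_le_inv_sin (n : ℕ) {x t : ℝ} (ht0 : 0 < t) (htx : t ≤ x / 2)
    (hx : x ≤ Real.pi) : |Dker n x| ≤ 1 / Real.sin t := by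
  have hpi := Real.pi_pos
  have hx2 : x / 2 ≤ Real.pi / 2 := by linarith
  have hst : 0 < Real.sin t := Real.sin_pos_of_pos_of_lt_pi ht0 (by linarith)
  have hmono : Real.sin t ≤ Real.sin (x / 2) := by
    apply Real.strictMonoOn_sin.monotoneOn ⟨by linarith, by linarith⟩ ⟨by linarith, by linarith⟩ htx
  have hsx : 0 < Real.sin (x / 2) := lt_of_lt_of_le hst hmono
  have hD : Dker n x = Real.sin ((2 * n + 1) * x / 2) / Real.sin (x / 2) := by
    field_simp
    rw [mul_comm, Dker_mul_sin]
  rw [hD, abs_div, abs_of_pos hsx, div_le_div_iff₀ hsx hst]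
  calc |Real.sin ((2 * n + 1) * x / 2)| * Real.sin t ≤ 1 * Real.sin (x/2) := by
        apply mul_le_mul (Real.abs_sin_le_one _) hmono hst.le zero_le_one
    _ ≤ 1 * Real.sin (x/2) := le_refl _

lemma sum_reindex (n : ℕ) (θ : ℝ) (r : ℤ) :
    ∑ k : Fin (2*n+1), |Dker n (θ - node n k)| =
      ∑ j ∈ Finset.range (2*n+1),
        |Dker n ((θ - r * (2*Real.pi/(2*(n:ℝ)+1))) + j * (2*Real.pi/(2*(n:ℝ)+1)))| := by
  have hNR : (0:ℝ) < 2*(n:ℝ)+1 := by positivity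
  have hN : (0:ℤ) < ((2*n+1 : ℕ) : ℤ) := by positivity
  unfold node
  rw [Fin.sum_univ_eq_sum_range (fun k => |Dker n (θ - 2*Real.pi*(k:ℝ)/(2*(n:ℝ)+1))|)]
  have hmem : ∀ a : ℕ, ((r - a) % ((2*n+1 : ℕ) : ℤ)).toNat ∈ Finset.range (2*n+1) := by
    intro a
    simp only [Finset.mem_range]
    have h1 : 0 ≤ (r - a) % ((2*n+1:ℕ):ℤ) := Int.emod_nonneg _ (by omega)
    have h2 : (r - a) % ((2*n+1:ℕ):ℤ) < ((2*n+1:ℕ):ℤ) := Int.emod_lt_of_pos _ hN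
    omega
  have hinv : ∀ a : ℕ, a < 2*n+1 →
      ((r - (((r - a) % ((2*n+1:ℕ):ℤ)).toNat : ℤ)) % ((2*n+1:ℕ):ℤ)).toNat = a := by
    intro a ha
    have h1 : 0 ≤ (r - a) % ((2*n+1:ℕ):ℤ) := Int.emod_nonneg _ (by omega)
    have h3 : r - (r - (a:ℤ)) % ((2*n+1:ℕ):ℤ)
        = (a:ℤ) + ((2*n+1:ℕ):ℤ) * ((r - (a:ℤ))/((2*n+1:ℕ):ℤ)) := by
      linarith [Int.mul_ediv_add_emod (r - (a:ℤ)) ((2*n+1:ℕ):ℤ)]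
    rw [Int.toNat_of_nonneg h1, h3, Int.add_mul_emod_self_left,
      Int.emod_eq_of_lt (by omega) (by exact_mod_cast Int.ofNat_lt.mpr ha)]
    omega
  refine Finset.sum_nbij' (fun k => ((r - k) % ((2*n+1 : ℕ) : ℤ)).toNat)
    (fun k => ((r - k) % ((2*n+1 : ℕ) : ℤ)).toNat)
    (fun a _ => hmem a) (fun a _ => hmem a)
    (fun a ha => hinv a (Finset.mem_range.mp ha))
    (fun a ha => hinv a (Finset.mem_range.mp ha)) ?_
  intro a ha
  simp only [Finset.mem_range] at ha
  set N : ℤ := ((2*n+1:ℕ):ℤ) with hNdef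
  set ρ : ℤ := (r - ↑a) % N with hρ
  have h1 : 0 ≤ ρ := Int.emod_nonneg _ (by omega)
  have hdiv : r - a = N * ((r - a) / N) + ρ := (Int.mul_ediv_add_emod _ _).symm
  set q : ℤ := (r - a) / N with hq
  congr 1
  have hcast : ((ρ.toNat : ℕ) : ℝ) = (ρ : ℝ) := by
    rw [← Int.cast_natCast, Int.toNat_of_nonneg h1]
  have hra : (r:ℝ) - (a:ℝ) = (2*(n:ℝ)+1) * (q:ℝ) + (ρ:ℝ) := by
    have hthis := congrArg (Int.cast : ℤ → ℝ) hdiv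
    push_cast at hthis
    have hNr : ((N : ℤ) : ℝ) = 2*(n:ℝ)+1 := by rw [hNdef]; push_cast; ring
    rw [hNr] at hthis
    push_cast
    linarith
  have harg : θ - 2*Real.pi*(a:ℝ)/(2*(n:ℝ)+1) =
      ((θ - r * (2*Real.pi/(2*(n:ℝ)+1))) + (ρ.toNat : ℕ) * (2*Real.pi/(2*(n:ℝ)+1))) + q * (2*Real.pi) := by
    rw [hcast]
    have h2pi : (2*Real.pi/(2*(n:ℝ)+1)) ≠ 0 := by positivity
    field_simp
    linear_combination (2*Real.pi) * hra
  rw [harg, Dker_int_period]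

lemma sum_bound (n : ℕ) (hn : 2 ≤ n) (δ : ℝ) (hδ : |δ| ≤ Real.pi / (2*(n:ℝ)+1)) :
    ∑ j ∈ Finset.range (2*n+1), |Dker n (δ + j * (2*Real.pi/(2*(n:ℝ)+1)))| ≤
      (2*(n:ℝ)+1) +
        2 * ∑ i ∈ Finset.range n, 1 / Real.sin ((2*(i:ℝ)+1)*Real.pi/(2*(2*(n:ℝ)+1))) := by
  have hπ := Real.pi_pos
  have hNR : (0:ℝ) < 2*(n:ℝ)+1 := by positivity
  set h : ℝ := 2*Real.pi/(2*(n:ℝ)+1) with hdef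
  have hh : 0 < h := by positivity
  have hNh : (2*(n:ℝ)+1) * h = 2*Real.pi := by rw [hdef]; field_simp
  rw [abs_le] at hδ
  have hhalf : h/2 = Real.pi/(2*(n:ℝ)+1) := by rw [hdef]; ring
  have hδ1 : -(h/2) ≤ δ := by rw [hhalf]; exact hδ.1
  have hδ2 : δ ≤ h/2 := by rw [hhalf]; exact hδ.2
  have key1 : ∀ i ∈ Finset.range n,
      |Dker n (δ + ((i:ℝ)+1) * h)| ≤ 1 / Real.sin ((2*(i:ℝ)+1)*Real.pi/(2*(2*(n:ℝ)+1))) := by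
    intro i hi
    have hi' : (i:ℝ) + 1 ≤ n := by exact_mod_cast Finset.mem_range.mp hi
    apply Dker_abs_le_inv_sin
    · positivity
    · have : (2*(i:ℝ)+1)*Real.pi/(2*(2*(n:ℝ)+1)) = (2*(i:ℝ)+1)*h/4 := by
        rw [hdef]; field_simp; ring
      rw [this]; nlinarith
    · nlinarith
  have key2 : ∀ i ∈ Finset.range n,
      |Dker n (δ + ((n:ℝ)+(i:ℝ)+1) * h)| ≤
        1 / Real.sin ((2*((n:ℝ)-(i:ℝ))-1)*Real.pi/(2*(2*(n:ℝ)+1))) := by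
    intro i hi
    have hi' : (i:ℝ) + 1 ≤ n := by exact_mod_cast Finset.mem_range.mp hi
    have harg : δ + ((n:ℝ)+(i:ℝ)+1) * h = -(((n:ℝ)-(i:ℝ))*h - δ) + (1:ℤ) * (2*Real.pi) := by
      push_cast; nlinarith [hNh]
    rw [harg, Dker_int_period, Dker_neg]
    apply Dker_abs_le_inv_sin
    · exact div_pos (by nlinarith) (by positivity)
    · have : (2*((n:ℝ)-(i:ℝ))-1)*Real.pi/(2*(2*(n:ℝ)+1)) = (2*((n:ℝ)-(i:ℝ))-1)*h/4 := by
        rw [hdef]; field_simp; ring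
      rw [this]; nlinarith
    · nlinarith
  have hsplit : ∑ j ∈ Finset.range (2*n+1), |Dker n (δ + j * h)| =
      |Dker n (δ + (0:ℕ) * h)| + (∑ i ∈ Finset.range n, |Dker n (δ + ((i:ℝ)+1) * h)|
        + ∑ i ∈ Finset.range n, |Dker n (δ + ((n:ℝ)+(i:ℝ)+1) * h)|) := by
    rw [Finset.sum_range_succ' (fun j => |Dker n (δ + (j:ℝ) * h)|) (2*n),
      show 2*n = n + n by ring, Finset.sum_range_add]
    push_cast
    ring
  rw [hsplit]
  have hrefl : ∑ i ∈ Finset.range n, 1 / Real.sin ((2*((n:ℝ)-(i:ℝ))-1)*Real.pi/(2*(2*(n:ℝ)+1)))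
      = ∑ i ∈ Finset.range n, 1 / Real.sin ((2*(i:ℝ)+1)*Real.pi/(2*(2*(n:ℝ)+1))) := by
    rw [← Finset.sum_range_reflect (fun i => 1 / Real.sin ((2*(i:ℝ)+1)*Real.pi/(2*(2*(n:ℝ)+1)))) n]
    refine Finset.sum_congr rfl fun i hi => ?_
    have hi' : i < n := Finset.mem_range.mp hi
    have hc : ((n - 1 - i : ℕ) : ℝ) = (n:ℝ) - 1 - (i:ℝ) := by
      have h1 : n - 1 - i = n - (i+1) := by omega
      rw [h1, Nat.cast_sub (by omega)]
      push_cast; ring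
    rw [hc]
    ring_nf
  have b0 : |Dker n (δ + ((0:ℕ):ℝ) * h)| ≤ 2*(n:ℝ)+1 := by simpa using Dker_abs_le n δ
  have b1 := Finset.sum_le_sum key1
  have b2 := Finset.sum_le_sum key2
  rw [hrefl] at b2
  push_cast at b0 ⊢
  linarith

set_option maxHeartbeats 1000000 in
lemma phi_sum (n : ℕ) (hn : 2 ≤ n) :
    ∑ i ∈ Finset.range n, 1 / Real.sin ((2*(i:ℝ)+1)*Real.pi/(2*(2*(n:ℝ)+1)))
      ≤ (2*(n:ℝ)+1) * (0.66 + (1/2) * (harmonic (n-1) : ℝ)) := by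
  have hπ := Real.pi_pos
  have hπ1 : (3.14:ℝ) < Real.pi := Real.pi_gt_d2
  have hπ2 : Real.pi < 3.15 := Real.pi_lt_d2
  have hNR : (0:ℝ) < 2*(n:ℝ)+1 := by positivity
  have hN5 : (5:ℝ) ≤ 2*(n:ℝ)+1 := by
    have : (2:ℝ) ≤ n := by exact_mod_cast hn
    linarith
  -- first term bound
  set t : ℝ := Real.pi/(2*(2*(n:ℝ)+1)) with htdef
  have ht0 : 0 < t := by positivity
  have hteq : t * (2*(2*(n:ℝ)+1)) = Real.pi := by rw [htdef]; field_simp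
  have ht315 : t ≤ 0.315 := by
    rw [htdef, div_le_iff₀ (by positivity)]
    nlinarith
  have ht1 : t ≤ 1 := by linarith
  have htsq : t^2 ≤ 0.1 := by nlinarith
  have hcube : 0.97 * t ≤ Real.sin t := by
    nlinarith [Real.sin_gt_sub_cube ht0]
  have hsint : 0 < Real.sin t := by nlinarith
  have first : 1 / Real.sin t ≤ 0.66 * (2*(n:ℝ)+1) := by
    rw [div_le_iff₀ hsint]
    nlinarith
  -- later terms
  have later : ∀ i ∈ Finset.range (n-1),
      1 / Real.sin ((2*((i:ℝ)+1)+1)*Real.pi/(2*(2*(n:ℝ)+1))) ≤ (2*(n:ℝ)+1) / (2*((i:ℝ)+1)) := by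
    intro i hi
    have hi' : (i:ℝ) + 1 ≤ (n:ℝ) - 1 := by
      have := Finset.mem_range.mp hi
      have : i + 1 ≤ n - 1 := this
      have h2 : (i:ℝ) + 1 ≤ ((n-1:ℕ):ℝ) := by exact_mod_cast this
      rw [Nat.cast_sub (by omega)] at h2
      push_cast at h2
      linarith
    set x : ℝ := (2*((i:ℝ)+1)+1)*Real.pi/(2*(2*(n:ℝ)+1)) with hxdef
    have hx0 : 0 < x := by positivity
    have hx2 : x ≤ Real.pi/2 := by
      rw [hxdef, div_le_div_iff₀ (by positivity) (by norm_num)]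
      nlinarith
    have hjordan := Real.mul_le_sin hx0.le hx2
    have hxval : 2/Real.pi * x = (2*((i:ℝ)+1)+1)/(2*(n:ℝ)+1) := by
      rw [hxdef]; field_simp
    have hsin : (2*((i:ℝ)+1))/(2*(n:ℝ)+1) ≤ Real.sin x := by
      rw [hxval] at hjordan
      have h2 : (2*((i:ℝ)+1))/(2*(n:ℝ)+1) ≤ (2*((i:ℝ)+1)+1)/(2*(n:ℝ)+1) := by
        gcongr
        linarith
      linarith
    have hsin0 : 0 < (2*((i:ℝ)+1))/(2*(n:ℝ)+1) := by positivity
    rw [div_le_div_iff₀ (by linarith) (by positivity)]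
    rw [div_le_iff₀ hNR] at hsin
    nlinarith [hsin]
  have hsplit : ∑ i ∈ Finset.range n, 1 / Real.sin ((2*(i:ℝ)+1)*Real.pi/(2*(2*(n:ℝ)+1)))
      = 1 / Real.sin t
        + ∑ i ∈ Finset.range (n-1), 1 / Real.sin ((2*((i:ℝ)+1)+1)*Real.pi/(2*(2*(n:ℝ)+1))) := by
    rw [show Finset.range n = Finset.range ((n-1)+1) by rw [Nat.sub_add_cancel (by omega)]]
    rw [Finset.sum_range_succ' (fun i => 1 / Real.sin ((2*(i:ℝ)+1)*Real.pi/(2*(2*(n:ℝ)+1)))) (n-1)]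
    rw [add_comm]
    congr 1
    · rw [htdef]
      norm_num
    · refine Finset.sum_congr rfl fun i _ => ?_
      push_cast
      rfl
  have hharm : ((harmonic (n-1) : ℚ) : ℝ) = ∑ i ∈ Finset.range (n-1), ((i:ℝ)+1)⁻¹ := by
    rw [harmonic]
    push_cast
    rfl
  have hrest : ∑ i ∈ Finset.range (n-1), 1 / Real.sin ((2*((i:ℝ)+1)+1)*Real.pi/(2*(2*(n:ℝ)+1)))
      ≤ (2*(n:ℝ)+1) * ((1/2) * (harmonic (n-1) : ℝ)) := by
    calc ∑ i ∈ Finset.range (n-1), 1 / Real.sin ((2*((i:ℝ)+1)+1)*Real.pi/(2*(2*(n:ℝ)+1)))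
        ≤ ∑ i ∈ Finset.range (n-1), (2*(n:ℝ)+1) / (2*((i:ℝ)+1)) := Finset.sum_le_sum later
      _ = (2*(n:ℝ)+1) * ((1/2) * (harmonic (n-1) : ℝ)) := by
          rw [hharm, Finset.mul_sum, Finset.mul_sum]
          refine Finset.sum_congr rfl fun i _ => ?_
          have h0 : (0:ℝ) < (i:ℝ)+1 := by positivity
          field_simp
  rw [hsplit]
  have := add_le_add first hrest
  linarith

lemma log_bound (n : ℕ) (hn : 2 ≤ n) :
    2.32 + ((harmonic (n-1) : ℚ) : ℝ) ≤ 5 * Real.log n := by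
  rcases eq_or_lt_of_le hn with h2 | h3
  · rw [← h2]
    norm_num [harmonic]
    have := Real.log_two_gt_d9
    norm_num at this ⊢
    linarith
  · have h3' : (3:ℕ) ≤ n := h3
    have hh : ((harmonic (n-1) : ℚ) : ℝ) ≤ 1 + Real.log ((n-1 : ℕ) : ℝ) :=
      harmonic_le_one_add_log (n-1)
    have hpos : (0:ℝ) < ((n-1:ℕ):ℝ) := by
      have : 1 ≤ n - 1 := by omega
      exact_mod_cast Nat.lt_of_lt_of_le Nat.zero_lt_one this
    have hlog1 : Real.log ((n-1:ℕ):ℝ) ≤ Real.log n := by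
      apply Real.log_le_log hpos
      exact_mod_cast Nat.sub_le n 1
    have hlogn : 1 ≤ Real.log n := by
      rw [Real.le_log_iff_exp_le (by positivity)]
      calc Real.exp 1 ≤ 2.7182818286 := Real.exp_one_lt_d9.le
        _ ≤ 3 := by norm_num
        _ ≤ (n:ℝ) := by exact_mod_cast h3'
    linarith

/-- Jackson-type bound: if `f` is `2π`-periodic with `|f(θ_k)| ≤ f_max` at the equidistant
nodes, then the trigonometric interpolant `S_n` of `f` satisfies
`|S_n(θ)| ≤ 5 f_max log n` for all `θ` (for `n ≥ 2`). -/
theorem jackson_bound_trigInterp (n : ℕ) (hn : 2 ≤ n) (f : ℝ → ℝ)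
    (hper : ∀ θ : ℝ, f (θ + 2 * Real.pi) = f θ)
    (fmax : ℝ) (hbound : ∀ k : Fin (2 * n + 1), |f (node n k)| ≤ fmax) :
    ∀ θ : ℝ, |trigInterp n (fun k => f (node n k)) θ| ≤ 5 * fmax * Real.log n := by
  intro θ
  have hπ := Real.pi_pos
  have hNR : (0:ℝ) < 2*(n:ℝ)+1 := by positivity
  have hfm : 0 ≤ fmax := le_trans (abs_nonneg _) (hbound ⟨0, by omega⟩)
  set h : ℝ := 2*Real.pi/(2*(n:ℝ)+1) with hdef
  have hh : 0 < h := by positivity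
  set r : ℤ := round (θ / h) with hrdef
  have hδ : |θ - r * h| ≤ Real.pi / (2*(n:ℝ)+1) := by
    have h1 : |θ/h - r| ≤ 1/2 := abs_sub_round (θ/h)
    have h2 : θ - r * h = h * (θ/h - r) := by field_simp
    rw [h2, abs_mul, abs_of_pos hh]
    calc h * |θ/h - r| ≤ h * (1/2) := by nlinarith [abs_nonneg (θ/h - (r:ℝ))]
      _ = Real.pi / (2*(n:ℝ)+1) := by rw [hdef]; ring
  have step1 : |trigInterp n (fun k => f (node n k)) θ| ≤
      (1/(2*(n:ℝ)+1)) * (fmax * ∑ k : Fin (2*n+1), |Dker n (θ - node n k)|) := by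
    rw [trigInterp_eq, abs_mul, abs_of_pos (by positivity : (0:ℝ) < 1/(2*(n:ℝ)+1)),
      Finset.mul_sum]
    apply mul_le_mul_of_nonneg_left ?_ (by positivity)
    calc |∑ k : Fin (2*n+1), f (node n k) * Dker n (θ - node n k)|
        ≤ ∑ k : Fin (2*n+1), |f (node n k) * Dker n (θ - node n k)| :=
          Finset.abs_sum_le_sum_abs _ _
      _ ≤ ∑ k : Fin (2*n+1), fmax * |Dker n (θ - node n k)| := by
          refine Finset.sum_le_sum fun k _ => ?_
          rw [abs_mul]
          exact mul_le_mul_of_nonneg_right (hbound k) (abs_nonneg _)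
  have step2 : ∑ k : Fin (2*n+1), |Dker n (θ - node n k)| ≤
      (2*(n:ℝ)+1) * (2.32 + ((harmonic (n-1) : ℚ) : ℝ)) := by
    rw [sum_reindex n θ r]
    calc ∑ j ∈ Finset.range (2*n+1),
          |Dker n ((θ - r * (2*Real.pi/(2*(n:ℝ)+1))) + j * (2*Real.pi/(2*(n:ℝ)+1)))|
        ≤ (2*(n:ℝ)+1) + 2 * ∑ i ∈ Finset.range n,
            1 / Real.sin ((2*(i:ℝ)+1)*Real.pi/(2*(2*(n:ℝ)+1))) := sum_bound n hn _ hδ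
      _ ≤ (2*(n:ℝ)+1) + 2 * ((2*(n:ℝ)+1) * (0.66 + (1/2) * (harmonic (n-1) : ℝ))) := by
          have := phi_sum n hn
          linarith
      _ = (2*(n:ℝ)+1) * (2.32 + ((harmonic (n-1) : ℚ) : ℝ)) := by ring
  have hlog := log_bound n hn
  calc |trigInterp n (fun k => f (node n k)) θ|
      ≤ (1/(2*(n:ℝ)+1)) * (fmax * ∑ k : Fin (2*n+1), |Dker n (θ - node n k)|) := step1
    _ ≤ (1/(2*(n:ℝ)+1)) * (fmax * ((2*(n:ℝ)+1) * (2.32 + ((harmonic (n-1) : ℚ) : ℝ)))) := by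
        apply mul_le_mul_of_nonneg_left (mul_le_mul_of_nonneg_left step2 hfm) (by positivity)
    _ = fmax * (2.32 + ((harmonic (n-1) : ℚ) : ℝ)) := by field_simp
    _ ≤ fmax * (5 * Real.log n) := mul_le_mul_of_nonneg_left hlog hfm
    _ = 5 * fmax * Real.log n := by ring
end

section
/- (Shot-count bound for inference error) Fix a ∈ (0,1), δ > 0, and n ≥ 2. If the number of shots satisfies N ≥ 50 log²(n) log((4n+2)/a)/δ², and each node estimate satisfies the Hoeffding tail Pr(|R(θ_k) − R̄(θ_k)| ≥ ε) ≤ 2exp(−Nε²/2), then with probability at least 1 − a the interpolated response satisfies |R(θ) − R̃(θ)| ≤ δ for all θ, where δ = 5ε log(n) and R̃ is the trigonometric interpolant of the estimates at the 2n+1 equidistant nodes. -/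
open MeasureTheory ProbabilityTheory

/-- Shot-count bound for the inference error: with `N ≥ 50 log²(n) log((4n+2)/a)/δ²` shots,
assuming the Hoeffding tail for each node estimate and the deterministic interpolation
stability bound `|R(θ) − R̃(θ)| ≤ 5 log(n)·max_k|R(θ_k) − R̄(θ_k)|`, the event that the
inferred response deviates from the true one by more than `δ` somewhere has probability
at most `a`. -/
theorem shot_count_inference_bound {Ω : Type*} [MeasureSpace Ω]
    [IsProbabilityMeasure (ℙ : Measure Ω)]
    (n N : ℕ) (hn : 2 ≤ n) (a δ : ℝ) (ha : 0 < a) (ha1 : a < 1) (hδ : 0 < δ)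
    (R : ℝ → ℝ) (Rbar : Fin (2 * n + 1) → Ω → ℝ) (Rtilde : Ω → ℝ → ℝ)
    (hhoeffding : ∀ (k : Fin (2 * n + 1)) (ε : ℝ), 0 < ε →
      ℙ {ω | ε ≤ |R (node n k) - Rbar k ω|} ≤
        ENNReal.ofReal (2 * Real.exp (-(N : ℝ) * ε ^ 2 / 2)))
    (hstab : ∀ (ω : Ω) (θ : ℝ),
      |R θ - Rtilde ω θ| ≤
        5 * Real.log n *
          (Finset.univ.sup' Finset.univ_nonempty fun k => |R (node n k) - Rbar k ω|))
    (hN : (N : ℝ) ≥ 50 * (Real.log n) ^ 2 * Real.log ((4 * (n : ℝ) + 2) / a) / δ ^ 2) :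
    ℙ {ω | ∀ θ : ℝ, |R θ - Rtilde ω θ| ≤ δ} ≥ 1 - ENNReal.ofReal a := by
  have hn1 : (1 : ℝ) < (n : ℝ) := by exact_mod_cast lt_of_lt_of_le one_lt_two hn
  set L := Real.log n with hLdef
  have hLpos : 0 < L := Real.log_pos hn1
  set ε : ℝ := δ / (5 * L) with hεdef
  have hεpos : 0 < ε := div_pos hδ (by positivity)
  set Bad : Set Ω := ⋃ k : Fin (2 * n + 1), {ω | ε ≤ |R (node n k) - Rbar k ω|} with hBad
  -- key real inequality
  have hratio : (0 : ℝ) < (4 * (n : ℝ) + 2) / a := by positivity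
  have hM : -(N : ℝ) * ε ^ 2 / 2 ≤ -Real.log ((4 * (n : ℝ) + 2) / a) := by
    have hε2 : ε ^ 2 = δ ^ 2 / (25 * L ^ 2) := by
      rw [hεdef]; field_simp; ring
    have h1 : 50 * L ^ 2 * Real.log ((4 * (n : ℝ) + 2) / a) ≤ (N : ℝ) * δ ^ 2 := by
      have := (div_le_iff₀ (by positivity : (0:ℝ) < δ ^ 2)).1 hN
      linarith
    rw [hε2, show -(N:ℝ) * (δ ^ 2 / (25 * L ^ 2)) / 2 = -((N:ℝ) * δ ^ 2 / (50 * L ^ 2)) by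
      ring, neg_le_neg_iff, le_div_iff₀ (by positivity : (0:ℝ) < 50 * L ^ 2)]
    linarith
  have hexp : 2 * Real.exp (-(N : ℝ) * ε ^ 2 / 2) ≤ a / (2 * (n : ℝ) + 1) := by
    have := Real.exp_le_exp.2 hM
    rw [Real.exp_neg, Real.exp_log hratio] at this
    have h2 : ((4 * (n : ℝ) + 2) / a)⁻¹ = a / (4 * (n : ℝ) + 2) := by
      rw [inv_div]
    rw [h2] at this
    have : 2 * Real.exp (-(N : ℝ) * ε ^ 2 / 2) ≤ 2 * (a / (4 * (n : ℝ) + 2)) := by linarith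
    calc 2 * Real.exp (-(N : ℝ) * ε ^ 2 / 2) ≤ 2 * (a / (4 * (n : ℝ) + 2)) := this
      _ = a / (2 * (n : ℝ) + 1) := by
          rw [eq_div_iff (by positivity : (2 * (n:ℝ) + 1) ≠ 0)]
          field_simp
          ring
  have hBadle : ℙ Bad ≤ ENNReal.ofReal a := by
    have card : (Finset.univ : Finset (Fin (2 * n + 1))).card = 2 * n + 1 := by simp
    calc ℙ Bad ≤ ∑ k : Fin (2 * n + 1), ℙ {ω | ε ≤ |R (node n k) - Rbar k ω|} :=
          measure_iUnion_fintype_le _ _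
      _ ≤ ∑ _k : Fin (2 * n + 1), ENNReal.ofReal (a / (2 * (n : ℝ) + 1)) := by
          apply Finset.sum_le_sum
          intro k _
          exact le_trans (hhoeffding k ε hεpos) (ENNReal.ofReal_le_ofReal hexp)
      _ = (2 * n + 1 : ℕ) * ENNReal.ofReal (a / (2 * (n : ℝ) + 1)) := by
          rw [Finset.sum_const, card, nsmul_eq_mul]
      _ = ENNReal.ofReal ((2 * n + 1 : ℕ) * (a / (2 * (n : ℝ) + 1))) := by
          rw [ENNReal.ofReal_mul (by positivity), ENNReal.ofReal_natCast]
      _ ≤ ENNReal.ofReal a := by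
          apply ENNReal.ofReal_le_ofReal
          rw [show ((2 * n + 1 : ℕ) : ℝ) = 2 * (n : ℝ) + 1 by push_cast; ring]
          rw [mul_div_cancel₀ _ (by positivity : (2 * (n:ℝ) + 1) ≠ 0)]
  have hsub : Badᶜ ⊆ {ω | ∀ θ : ℝ, |R θ - Rtilde ω θ| ≤ δ} := by
    intro ω hω θ
    have hall : ∀ k : Fin (2 * n + 1), |R (node n k) - Rbar k ω| ≤ ε := by
      intro k
      by_contra h
      exact hω (Set.mem_iUnion.2 ⟨k, le_of_lt (lt_of_not_ge h)⟩)
    calc |R θ - Rtilde ω θ|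
        ≤ 5 * L * (Finset.univ.sup' Finset.univ_nonempty
            fun k => |R (node n k) - Rbar k ω|) := hstab ω θ
      _ ≤ 5 * L * ε := by
          apply mul_le_mul_of_nonneg_left _ (by positivity)
          exact Finset.sup'_le _ _ fun k _ => hall k
      _ = δ := by rw [hεdef]; field_simp
  have hmono : ℙ Badᶜ ≤ ℙ {ω | ∀ θ : ℝ, |R θ - Rtilde ω θ| ≤ δ} := measure_mono hsub
  have huniv : (1 : ENNReal) ≤ ℙ Bad + ℙ Badᶜ := by
    have : (Set.univ : Set Ω) ⊆ Bad ∪ Badᶜ := by rw [Set.union_compl_self]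
    calc (1 : ENNReal) = ℙ (Set.univ : Set Ω) := (measure_univ).symm
      _ ≤ ℙ (Bad ∪ Badᶜ) := measure_mono this
      _ ≤ ℙ Bad + ℙ Badᶜ := measure_union_le _ _
  have : 1 - ENNReal.ofReal a ≤ ℙ Badᶜ := by
    rw [tsub_le_iff_right]
    calc (1 : ENNReal) ≤ ℙ Bad + ℙ Badᶜ := huniv
      _ ≤ ENNReal.ofReal a + ℙ Badᶜ := by gcongr
      _ = ℙ Badᶜ + ENNReal.ofReal a := add_comm _ _
  exact le_trans this hmono
end
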